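/- (Proposition 2.1.) For every index k and for each • ∈ {*, ⧢}, we have Z•(k;T) = Σ_{j=0}^{b(k)} Z•(k^j;0) · T^j / j! in ℝ[T], where Z•(k^j;0) denotes the constant term (value at T = 0) of the polynomial Z•(k^j;T). -/

import Mathlib

open scoped BigOperators

/-- The Riemann zeta value ζ(n) = Σ_{m ≥ 1} 1/mⁿ. -/
noncomputable def rzeta (n : ℕ) : ℝ := ∑' m : ℕ+, 1 / (m : ℝ) ^ n

/-- The multiple zeta value ζ(k₁,…,k_r) = Σ_{m₁ > ⋯ > m_r ≥ 1} 1/(m₁^{k₁} ⋯ m_r^{k_r}). -/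
noncomputable def mzv (k : List ℕ) : ℝ :=
  ∑' m : {m : Fin k.length → ℕ+ // StrictAnti m}, ∏ i, 1 / ((m.1 i : ℝ) ^ k.get i)

/-- An index is a finite sequence of positive integers. -/
def IsIndex (k : List ℕ) : Prop := ∀ a ∈ k, 1 ≤ a

/-- An index is admissible if it is empty or its first entry exceeds 1. -/
def IsAdmissible (k : List ℕ) : Prop := ∀ a ∈ k.head?, 2 ≤ a

/-- Auxiliary harmonic product, on *reversed* indices (peeling the last entries). -/
noncomputable def harmAux : List ℕ → List ℕ → (List ℕ →₀ ℚ)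
  | [], b => Finsupp.single b 1
  | a, [] => Finsupp.single a 1
  | ka :: as, lb :: bs =>
      Finsupp.mapDomain (lb :: ·) (harmAux (ka :: as) bs)
      + Finsupp.mapDomain (ka :: ·) (harmAux as (lb :: bs))
      + Finsupp.mapDomain ((ka + lb) :: ·) (harmAux as bs)

/-- The harmonic (stuffle) product of two indices, as an element of the
ℚ-vector space freely spanned by indices. -/
noncomputable def harm (k l : List ℕ) : List ℕ →₀ ℚ :=
  Finsupp.mapDomain List.reverse (harmAux k.reverse l.reverse)

/-- The word 0^{k₁-1}1 ⋯ 0^{k_r-1}1 associated to an index. -/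
def indexToWord (k : List ℕ) : List Bool :=
  k.flatMap fun a => List.replicate (a - 1) false ++ [true]

/-- Parse a word in letters 0, 1 back into an index. -/
def wordToIndex : List Bool → List ℕ
  | [] => []
  | true :: w => 1 :: wordToIndex w
  | false :: w =>
      match wordToIndex w with
      | [] => []
      | a :: rest => (a + 1) :: rest

/-- The shuffle product of two words. -/
noncomputable def wordShuffle : List Bool → List Bool → (List Bool →₀ ℚ)
  | [], b => Finsupp.single b 1
  | a, [] => Finsupp.single a 1
  | x :: xs, y :: ys =>
      Finsupp.mapDomain (x :: ·) (wordShuffle xs (y :: ys))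
      + Finsupp.mapDomain (y :: ·) (wordShuffle (x :: xs) ys)

/-- The shuffle product of two indices, as an element of the
ℚ-vector space freely spanned by indices. -/
noncomputable def shuf (k l : List ℕ) : List ℕ →₀ ℚ :=
  Finsupp.mapDomain wordToIndex (wordShuffle (indexToWord k) (indexToWord l))

/-- ℚ-linear extension of a map defined on indices. -/
noncomputable def Zext (Z : List ℕ → Polynomial ℝ) (v : List ℕ →₀ ℚ) : Polynomial ℝ :=
  v.sum fun m c => c • Z m

/-- Exponential of a formal power series (with zero constant term) over a field. -/
noncomputable def pexp {R : Type*} [Field R] (f : PowerSeries R) : PowerSeries R :=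
  PowerSeries.mk fun n =>
    ∑ m ∈ Finset.range (n + 1), PowerSeries.coeff (R := R) n (f ^ m) / (m.factorial : R)

/-- A(u) = exp(Σ_{n≥2} ((-1)ⁿ/n) ζ(n) uⁿ) ∈ ℝ[[u]]. -/
noncomputable def Aseries : PowerSeries ℝ :=
  pexp (PowerSeries.mk fun n => if 2 ≤ n then (-1 : ℝ) ^ n / n * rzeta n else 0)

/-- The linear map ρ determined by ρ(Tᵐ/m!) = (coefficient of uᵐ in A(u)e^{Tu}),
i.e. ρ(Tᵐ) = m! Σ_{j≤m} A_{m-j} Tʲ/j!. -/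
noncomputable def rho {R : Type*} [Field R] (A : PowerSeries R) (P : Polynomial R) :
    Polynomial R :=
  P.sum fun m a =>
    a • (m.factorial : R) •
      ∑ j ∈ Finset.range (m + 1),
        (PowerSeries.coeff (R := R) (m - j) A / (j.factorial : R)) • (Polynomial.X : Polynomial R) ^ j

/-- b(k): the number of leading 1's of an index k = ({1}^b, l) with l admissible. -/
def bIndex (k : List ℕ) : ℕ := (k.takeWhile (· = 1)).length
open Polynomial Finsupp

lemma ratsmul (q : ℚ) (p : ℝ[X]) : q • p = Polynomial.C (q : ℝ) * p := by
  rw [← algebraMap_smul ℝ q p, smul_eq_C_mul]; norm_num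

lemma harmAux_nil_left (b : List ℕ) : harmAux [] b = Finsupp.single b 1 := by
  rw [harmAux]

lemma harmAux_nil_right (a : List ℕ) : harmAux a [] = Finsupp.single a 1 := by
  cases a
  · rw [harmAux]
  · rw [harmAux.eq_def]

lemma harmAux_one_cons (c : ℕ) (cs : List ℕ) :
    harmAux [1] (c :: cs) =
      Finsupp.mapDomain (c :: ·) (harmAux [1] cs) + Finsupp.single (1 :: c :: cs) 1
        + Finsupp.single ((1 + c) :: cs) 1 := by
  rw [harmAux]
  simp [harmAux_nil_left, Finsupp.mapDomain_single]

lemma harmAux_one_append (bs : List ℕ) (x : ℕ) :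
    harmAux [1] (bs ++ [x]) =
      Finsupp.mapDomain (· ++ [x]) (harmAux [1] bs)
      + Finsupp.single (bs ++ [x, 1]) 1 + Finsupp.single (bs ++ [x + 1]) 1 := by
  induction bs with
  | nil =>
      simp only [List.nil_append, harmAux_one_cons, harmAux_nil_right, harmAux_nil_left,
        Finsupp.mapDomain_single, List.singleton_append, Nat.add_comm 1 x]
      abel
  | cons c cs ih =>
      simp only [List.cons_append, harmAux_one_cons, ih, Finsupp.mapDomain_add,
        Finsupp.mapDomain_single]
      rw [← Finsupp.mapDomain_comp, ← Finsupp.mapDomain_comp]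
      have : ((c :: ·) ∘ (· ++ [x])) = ((· ++ [x]) ∘ (c :: ·) : List ℕ → List ℕ) := rfl
      rw [this, Nat.add_comm 1 c]
      abel

lemma harm_one_cons (x : ℕ) (w : List ℕ) :
    harm [1] (x :: w) = Finsupp.mapDomain (x :: ·) (harm [1] w)
      + Finsupp.single (1 :: x :: w) 1 + Finsupp.single ((x + 1) :: w) 1 := by
  unfold harm
  have h1 : (x :: w).reverse = w.reverse ++ [x] := by simp
  have h0 : ([1] : List ℕ).reverse = [1] := rfl
  rw [h0, h1, harmAux_one_append, Finsupp.mapDomain_add, Finsupp.mapDomain_add,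
    Finsupp.mapDomain_single, Finsupp.mapDomain_single, ← Finsupp.mapDomain_comp,
    ← Finsupp.mapDomain_comp]
  have h2 : (List.reverse ∘ (· ++ [x])) = ((x :: ·) ∘ List.reverse : List ℕ → List ℕ) := by
    funext t; simp
  rw [h2]
  simp

lemma harm_one_nil : harm [1] [] = Finsupp.single [1] 1 := by
  unfold harm
  have h0 : ([1] : List ℕ).reverse = [1] := rfl
  rw [h0]
  simp [harmAux_nil_right, Finsupp.mapDomain_single]
def bump : List ℕ → List ℕ
  | [] => []
  | a :: t => (a + 1) :: t

lemma wordToIndex_true (z : List Bool) : wordToIndex (true :: z) = 1 :: wordToIndex z := by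
  rw [wordToIndex]

lemma wordToIndex_false (z : List Bool) : wordToIndex (false :: z) = bump (wordToIndex z) := by
  rw [wordToIndex]
  cases h : wordToIndex z <;> simp [bump]

lemma wordShuffle_nil_left (b : List Bool) : wordShuffle [] b = Finsupp.single b 1 := by
  rw [wordShuffle]

lemma wordShuffle_one_cons (y : Bool) (ys : List Bool) :
    wordShuffle [true] (y :: ys) = Finsupp.single (true :: y :: ys) 1
      + Finsupp.mapDomain (y :: ·) (wordShuffle [true] ys) := by
  rw [wordShuffle]
  simp [wordShuffle_nil_left, Finsupp.mapDomain_single]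

lemma wordShuffle_one_nil : wordShuffle [true] [] = Finsupp.single [true] 1 := by
  rw [wordShuffle.eq_def]

lemma indexToWord_nil : indexToWord [] = [] := rfl

lemma indexToWord_cons (a : ℕ) (k : List ℕ) :
    indexToWord (a :: k) = List.replicate (a - 1) false ++ true :: indexToWord k := by
  simp [indexToWord, List.flatMap_cons, List.append_assoc]

lemma wordToIndex_rep (s : ℕ) (v : List Bool) :
    wordToIndex (List.replicate s false ++ true :: v) = (s + 1) :: wordToIndex v := by
  induction s with
  | zero => simp [wordToIndex_true]
  | succ n ih => simp [List.replicate_succ, wordToIndex_false, ih, bump]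

lemma wordToIndex_indexToWord (k : List ℕ) (hk : IsIndex k) :
    wordToIndex (indexToWord k) = k := by
  induction k with
  | nil => rfl
  | cons a w ih =>
      have ha : 1 ≤ a := hk a List.mem_cons_self
      have hw : IsIndex w := fun b hb => hk b (List.mem_cons_of_mem _ hb)
      rw [indexToWord_cons, wordToIndex_rep, ih hw, Nat.sub_add_cancel ha]
lemma wordToIndex_comp_true :
    (wordToIndex ∘ (true :: ·)) = ((1 :: ·) ∘ wordToIndex : List Bool → List ℕ) := by
  funext z; exact wordToIndex_true z

lemma wordToIndex_comp_false :
    (wordToIndex ∘ (false :: ·)) = (bump ∘ wordToIndex : List Bool → List ℕ) := by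
  funext z; exact wordToIndex_false z

lemma shuf_one_eq (m : List ℕ) :
    shuf [1] m = Finsupp.mapDomain wordToIndex (wordShuffle [true] (indexToWord m)) := by
  unfold shuf
  rfl

lemma shuf_one_cons (x : ℕ) (w : List ℕ) (hx : 1 ≤ x) (hw : IsIndex w) :
    ∃ E : List ℕ →₀ ℚ,
      shuf [1] (x :: w) = Finsupp.mapDomain (x :: ·) (shuf [1] w)
          + Finsupp.single (1 :: x :: w) 1 + E
        ∧ ∀ t ∈ E.support, IsIndex t ∧ t.length ≤ w.length + 2
            ∧ ∃ h tl, t = h :: tl ∧ 2 ≤ h := by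
  induction x with
  | zero => omega
  | succ n ih =>
    rcases Nat.eq_zero_or_pos n with hn | hn
    · subst hn
      refine ⟨0, ?_, by simp⟩
      rw [shuf_one_eq, indexToWord_cons]
      simp only [Nat.sub_self, List.replicate, List.nil_append]
      rw [wordShuffle_one_cons, Finsupp.mapDomain_add, Finsupp.mapDomain_single,
        ← Finsupp.mapDomain_comp, wordToIndex_comp_true, Finsupp.mapDomain_comp,
        wordToIndex_true, wordToIndex_true, wordToIndex_indexToWord w hw, ← shuf_one_eq]
      abel
    · obtain ⟨E', hE', hEp⟩ := ih hn
      have hnw : IsIndex (n :: w) := by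
        intro b hb
        rcases List.mem_cons.1 hb with h | h
        · omega
        · exact hw b h
      refine ⟨Finsupp.single (2 :: n :: w) 1 + Finsupp.mapDomain bump E', ?_, ?_⟩
      · have h2 : indexToWord ((n+1) :: w) = false :: indexToWord (n :: w) := by
          rw [indexToWord_cons, indexToWord_cons]
          have : n + 1 - 1 = (n - 1) + 1 := by omega
          rw [this, List.replicate_succ]
          simp
        rw [shuf_one_eq, h2, wordShuffle_one_cons, Finsupp.mapDomain_add,
          Finsupp.mapDomain_single, ← Finsupp.mapDomain_comp, wordToIndex_comp_false,
          Finsupp.mapDomain_comp, ← shuf_one_eq, hE', wordToIndex_true, wordToIndex_false,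
          wordToIndex_indexToWord (n :: w) hnw]
        rw [Finsupp.mapDomain_add, Finsupp.mapDomain_add, Finsupp.mapDomain_single,
          ← Finsupp.mapDomain_comp]
        have h4 : (bump ∘ (n :: ·)) = (((n+1) :: ·) : List ℕ → List ℕ) := by
          funext t; rfl
        have h5 : bump (1 :: n :: w) = 2 :: n :: w := rfl
        have h6 : bump (n :: w) = (n + 1) :: w := rfl
        rw [h4, h5, h6]
        abel
      · intro t ht
        rcases Finset.mem_union.1 (Finsupp.support_add ht) with ht | ht
        · have := Finsupp.support_single_subset ht
          simp only [Finset.mem_singleton] at this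
          subst this
          refine ⟨?_, by simp, 2, n :: w, rfl, le_refl 2⟩
          intro b hb
          rcases List.mem_cons.1 hb with h | h
          · omega
          · exact hnw b h
        · have := Finsupp.mapDomain_support ht
          rcases Finset.mem_image.1 this with ⟨s, hs, rfl⟩
          obtain ⟨hsi, hsl, h, tl, rfl, hh⟩ := hEp s hs
          refine ⟨?_, ?_, h + 1, tl, rfl, by omega⟩
          · intro b hb
            rcases List.mem_cons.1 hb with h | h
            · omega
            · exact hsi b (by simp [h])
          · simpa [bump] using hsl
lemma bIndex_nil : bIndex [] = 0 := rfl

lemma bIndex_cons_one (w : List ℕ) : bIndex (1 :: w) = bIndex w + 1 := by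
  simp [bIndex, List.takeWhile_cons]

lemma bIndex_cons_ne (x : ℕ) (w : List ℕ) (hx : x ≠ 1) : bIndex (x :: w) = 0 := by
  simp [bIndex, List.takeWhile_cons, hx]

lemma bIndex_le (m : List ℕ) : bIndex m ≤ m.length :=
  (List.takeWhile_prefix _).length_le

lemma eq_cons_of_bIndex_ne (m : List ℕ) (h : bIndex m ≠ 0) : ∃ m', m = 1 :: m' := by
  cases m with
  | nil => exact absurd rfl h
  | cons x w =>
      by_cases hx : x = 1
      · exact ⟨w, by rw [hx]⟩
      · exact absurd (bIndex_cons_ne x w hx) h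

lemma adm_of_bIndex_eq_zero (m : List ℕ) (hi : IsIndex m) (h : bIndex m = 0) :
    IsAdmissible m := by
  cases m with
  | nil => intro a ha; simp at ha
  | cons x w =>
      intro a ha
      simp only [List.head?_cons, Option.mem_def, Option.some.injEq] at ha
      subst ha
      have h1 : 1 ≤ x := hi x List.mem_cons_self
      by_cases hx : x = 1
      · rw [hx, bIndex_cons_one] at h; omega
      · omega

lemma IsIndex_nil : IsIndex [] := fun a ha => by simp at ha

lemma IsIndex_cons {x : ℕ} {w : List ℕ} (hx : 1 ≤ x) (hw : IsIndex w) : IsIndex (x :: w) := by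
  intro a ha
  rcases List.mem_cons.1 ha with h | h
  · omega
  · exact hw a h

lemma IsIndex_of_cons {x : ℕ} {w : List ℕ} (h : IsIndex (x :: w)) : IsIndex w :=
  fun a ha => h a (List.mem_cons_of_mem _ ha)

lemma IsIndex_head {x : ℕ} {w : List ℕ} (h : IsIndex (x :: w)) : 1 ≤ x :=
  h x List.mem_cons_self

lemma Zext_single (Z : List ℕ → Polynomial ℝ) (t : List ℕ) (c : ℚ) :
    Zext Z (Finsupp.single t c) = c • Z t :=
  Finsupp.sum_single_index (zero_smul _ _)

lemma Zext_add (Z : List ℕ → Polynomial ℝ) (u v : List ℕ →₀ ℚ) :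
    Zext Z (u + v) = Zext Z u + Zext Z v :=
  Finsupp.sum_add_index' (fun a => zero_smul _ _) (fun a b c => add_smul _ _ _)

lemma Zext_sub (Z : List ℕ → Polynomial ℝ) (u v : List ℕ →₀ ℚ) :
    Zext Z (u - v) = Zext Z u - Zext Z v :=
  Finsupp.sum_sub_index (fun a b c => sub_smul _ _ _)

lemma Zext_mapDomain (Z : List ℕ → Polynomial ℝ) (f : List ℕ → List ℕ) (v : List ℕ →₀ ℚ) :
    Zext Z (Finsupp.mapDomain f v) = Zext (fun t => Z (f t)) v :=
  Finsupp.sum_mapDomain_index (fun a => zero_smul _ _) (fun a b c => add_smul _ _ _)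

lemma Zext_congr (Z W : List ℕ → Polynomial ℝ) (v : List ℕ →₀ ℚ)
    (h : ∀ t ∈ v.support, Z t = W t) : Zext Z v = Zext W v :=
  Finsupp.sum_congr (fun t ht => by show v t • Z t = v t • W t; rw [h t ht])

lemma Zext_zero_of (W : List ℕ → Polynomial ℝ) (v : List ℕ →₀ ℚ)
    (h : ∀ t ∈ v.support, W t = 0) : Zext W v = 0 := by
  rw [Zext_congr W (fun _ => 0) v h]
  unfold Zext
  simp [Finsupp.sum]

lemma Zext_derivative (Z : List ℕ → Polynomial ℝ) (v : List ℕ →₀ ℚ) :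
    Polynomial.derivative (Zext Z v) = Zext (fun t => Polynomial.derivative (Z t)) v := by
  unfold Zext Finsupp.sum
  rw [map_sum]
  refine Finset.sum_congr rfl fun t _ => ?_
  dsimp only
  rw [ratsmul, ratsmul, Polynomial.derivative_C_mul]
/-- The "formal derivative" assignment on indices. -/
noncomputable def Wder (Z : List ℕ → Polynomial ℝ) : List ℕ → Polynomial ℝ :=
  fun t => if bIndex t = 0 then 0 else Z t.tail

lemma Wder_cons_one (Z : List ℕ → Polynomial ℝ) (t : List ℕ) : Wder Z (1 :: t) = Z t := by
  simp [Wder, bIndex_cons_one]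

lemma Wder_eq_zero (Z : List ℕ → Polynomial ℝ) {t : List ℕ} (h : bIndex t = 0) :
    Wder Z t = 0 := by simp [Wder, h]

section Generic

variable (Z : List ℕ → Polynomial ℝ) (P : List ℕ → (List ℕ →₀ ℚ))

/-- Support property of the product with (1). -/
lemma supp_P
    (H1 : P [] = Finsupp.single [1] 1)
    (H2 : ∀ x w, 1 ≤ x → IsIndex w → ∃ E : List ℕ →₀ ℚ,
      P (x :: w) = Finsupp.mapDomain (x :: ·) (P w) + Finsupp.single (1 :: x :: w) 1 + E
        ∧ ∀ t ∈ E.support, IsIndex t ∧ t.length ≤ w.length + 2 ∧ ∃ h tl, t = h :: tl ∧ 2 ≤ h) :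
    ∀ m, IsIndex m → ∀ t ∈ (P m).support,
      IsIndex t ∧ t.length ≤ m.length + 1 ∧ (t = 1 :: m ∨ bIndex t ≤ bIndex m) := by
  intro m
  induction m with
  | nil =>
      intro _ t ht
      rw [H1] at ht
      have := Finsupp.support_single_subset ht
      simp only [Finset.mem_singleton] at this
      subst this
      exact ⟨IsIndex_cons le_rfl IsIndex_nil, by simp, Or.inl rfl⟩
  | cons x w ih =>
      intro hm t ht
      have hx := IsIndex_head hm
      have hw := IsIndex_of_cons hm
      obtain ⟨E, hE, hEp⟩ := H2 x w hx hw
      rw [hE] at ht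
      rcases Finset.mem_union.1 (Finsupp.support_add ht) with ht | ht
      · rcases Finset.mem_union.1 (Finsupp.support_add ht) with ht | ht
        · rcases Finset.mem_image.1 (Finsupp.mapDomain_support ht) with ⟨s, hs, rfl⟩
          obtain ⟨h1, h2, h3⟩ := ih hw s hs
          refine ⟨IsIndex_cons hx h1, by simpa using h2, ?_⟩
          by_cases hx1 : x = 1
          · subst hx1
            rcases h3 with rfl | h3
            · exact Or.inl rfl
            · right; rw [bIndex_cons_one, bIndex_cons_one]; omega
          · right; rw [bIndex_cons_ne x s hx1]; omega
        · have := Finsupp.support_single_subset ht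
          simp only [Finset.mem_singleton] at this
          subst this
          exact ⟨IsIndex_cons le_rfl hm, by simp, Or.inl rfl⟩
      · obtain ⟨h1, h2, h, tl, rfl, hh⟩ := hEp t ht
        exact ⟨h1, by simpa using h2,
          Or.inr (by rw [bIndex_cons_ne h tl (by omega)]; omega)⟩

/-- Coefficient of (1,k) in (1)•k is b(k)+1. -/
lemma coeff_P
    (H1 : P [] = Finsupp.single [1] 1)
    (H2 : ∀ x w, 1 ≤ x → IsIndex w → ∃ E : List ℕ →₀ ℚ,
      P (x :: w) = Finsupp.mapDomain (x :: ·) (P w) + Finsupp.single (1 :: x :: w) 1 + E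
        ∧ ∀ t ∈ E.support, IsIndex t ∧ t.length ≤ w.length + 2 ∧ ∃ h tl, t = h :: tl ∧ 2 ≤ h) :
    ∀ m, IsIndex m → (P m) (1 :: m) = (bIndex m : ℚ) + 1 := by
  intro m
  induction m with
  | nil =>
      intro _
      rw [H1, bIndex_nil]
      simp
  | cons x w ih =>
      intro hm
      have hx := IsIndex_head hm
      have hw := IsIndex_of_cons hm
      obtain ⟨E, hE, hEp⟩ := H2 x w hx hw
      have hEz : E (1 :: x :: w) = 0 := by
        rw [← Finsupp.notMem_support_iff]
        intro hmem
        obtain ⟨_, _, h, tl, heq, hh⟩ := hEp _ hmem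
        rw [List.cons_eq_cons] at heq
        omega
      rw [hE, Finsupp.add_apply, Finsupp.add_apply, Finsupp.single_eq_same, hEz]
      by_cases hx1 : x = 1
      · subst hx1
        have h7 : Finsupp.mapDomain ((1 : ℕ) :: ·) (P w) (1 :: 1 :: w) = P w (1 :: w) :=
          Finsupp.mapDomain_apply (List.cons_injective) _ _
        rw [h7, ih hw, bIndex_cons_one]
        push_cast
        ring
      · have h7 : Finsupp.mapDomain (x :: ·) (P w) (1 :: x :: w) = 0 := by
          apply Finsupp.mapDomain_notin_range
          rintro ⟨z, hz⟩
          rw [List.cons_eq_cons] at hz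
          exact hx1 hz.1
        rw [h7, bIndex_cons_ne x w hx1]
        norm_num

lemma lexmeas {a₁ b₁ a₂ b₂ N : ℕ} (hb : b₁ ≤ a₁)
    (h : a₁ < a₂ ∨ (a₁ = a₂ ∧ b₁ < b₂)) (hN : a₂ * (a₂ + 1) + b₂ ≤ N + 1) :
    a₁ * (a₁ + 1) + b₁ ≤ N := by
  rcases h with h | ⟨rfl, h⟩
  · have h2 : a₁ * (a₁ + 1) + b₁ < a₂ * (a₂ + 1) := by nlinarith
    omega
  · omega

/-- The key inductive step. -/
lemma der_key
    (H2 : ∀ x w, 1 ≤ x → IsIndex w → ∃ E : List ℕ →₀ ℚ,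
      P (x :: w) = Finsupp.mapDomain (x :: ·) (P w) + Finsupp.single (1 :: x :: w) 1 + E
        ∧ ∀ t ∈ E.support, IsIndex t ∧ t.length ≤ w.length + 2 ∧ ∃ h tl, t = h :: tl ∧ 2 ≤ h)
    (H3 : ∀ m, IsIndex m → Zext Z (P m) = Polynomial.X * Z m)
    (H4 : ∀ k, IsIndex k → IsAdmissible k → Z k = Polynomial.C (mzv k))
    (hsupp : ∀ m, IsIndex m → ∀ t ∈ (P m).support,
      IsIndex t ∧ t.length ≤ m.length + 1 ∧ (t = 1 :: m ∨ bIndex t ≤ bIndex m))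
    (hcoeff : ∀ m, IsIndex m → (P m) (1 :: m) = (bIndex m : ℚ) + 1)
    (m : List ℕ) (hm : IsIndex m)
    (IH : ∀ t', IsIndex t' →
      (t'.length < m.length ∨ (t'.length = m.length ∧ bIndex t' < bIndex m)) →
      Polynomial.derivative (Z (1 :: t')) = Z t') :
    Polynomial.derivative (Z (1 :: m)) = Z m := by
  classical
  set R : List ℕ →₀ ℚ := P m - Finsupp.single (1 :: m) ((bIndex m : ℚ) + 1) with hRdef
  have hPm : P m = R + Finsupp.single (1 :: m) ((bIndex m : ℚ) + 1) := by
    rw [hRdef]; abel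
  have hRsupp : ∀ t ∈ R.support,
      IsIndex t ∧ t.length ≤ m.length + 1 ∧ bIndex t ≤ bIndex m ∧ t ≠ 1 :: m := by
    intro t ht
    have hne : t ≠ 1 :: m := by
      intro h
      subst h
      have h2 := Finsupp.mem_support_iff.1 ht
      rw [hRdef, Finsupp.sub_apply, Finsupp.single_eq_same, hcoeff m hm] at h2
      simp at h2
    have htP : t ∈ (P m).support := by
      rw [Finsupp.mem_support_iff] at ht ⊢
      rw [hRdef, Finsupp.sub_apply, Finsupp.single_eq_of_ne' (Ne.symm hne), sub_zero] at ht
      exact ht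
    obtain ⟨h1, h2, h3⟩ := hsupp m hm t htP
    exact ⟨h1, h2, h3.resolve_left hne, hne⟩
  have hWt : ∀ t, IsIndex t → t.length ≤ m.length + 1 → bIndex t ≤ bIndex m → t ≠ 1 :: m →
      Polynomial.derivative (Z t) = Wder Z t := by
    intro t h1 h2 h3 h4
    by_cases h0 : bIndex t = 0
    · rw [H4 t h1 (adm_of_bIndex_eq_zero t h1 h0), Wder_eq_zero Z h0]
      simp
    · obtain ⟨t', rfl⟩ := eq_cons_of_bIndex_ne t h0
      have h5 : IsIndex t' := IsIndex_of_cons h1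
      rw [bIndex_cons_one] at h3
      have hlt : t'.length < m.length ∨ (t'.length = m.length ∧ bIndex t' < bIndex m) := by
        have hl : t'.length + 1 ≤ m.length + 1 := by simpa using h2
        rcases Nat.lt_or_ge t'.length m.length with h6 | h6
        · exact Or.inl h6
        · exact Or.inr ⟨by omega, by omega⟩
      rw [IH t' h5 hlt, Wder_cons_one]
  have hmain : Polynomial.X * Z m = Zext Z R + ((bIndex m : ℚ) + 1) • Z (1 :: m) := by
    rw [← H3 m hm]
    conv_lhs => rw [hPm]
    rw [Zext_add, Zext_single]
  have hZRW : Zext (fun t => Polynomial.derivative (Z t)) R = Zext (Wder Z) R := by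
    apply Zext_congr
    intro t ht
    obtain ⟨h1, h2, h3, h4⟩ := hRsupp t ht
    exact hWt t h1 h2 h3 h4
  have hder : Z m + Polynomial.X * Polynomial.derivative (Z m)
      = Zext (Wder Z) R + ((bIndex m : ℚ) + 1) • Polynomial.derivative (Z (1 :: m)) := by
    have h := congrArg Polynomial.derivative hmain
    rwa [Polynomial.derivative_mul, Polynomial.derivative_X, one_mul, map_add, Zext_derivative,
      hZRW, ratsmul ((bIndex m : ℚ) + 1) (Z (1 :: m)), Polynomial.derivative_C_mul,
      ← ratsmul ((bIndex m : ℚ) + 1)] at h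
  by_cases h0 : bIndex m = 0
  · have hZm : Polynomial.derivative (Z m) = 0 := by
      rw [H4 m hm (adm_of_bIndex_eq_zero m hm h0)]
      simp
    have hC : Zext (Wder Z) R = 0 := by
      apply Zext_zero_of
      intro t ht
      obtain ⟨_, _, h3, _⟩ := hRsupp t ht
      exact Wder_eq_zero Z (by omega)
    rw [hZm, hC, h0] at hder
    simpa using hder.symm
  · obtain ⟨m', rfl⟩ := eq_cons_of_bIndex_ne m h0
    have hm' : IsIndex m' := IsIndex_of_cons hm
    have hZm' : Polynomial.derivative (Z (1 :: m')) = Z m' :=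
      IH m' hm' (Or.inl (by simp))
    obtain ⟨E, hE, hEp⟩ := H2 1 m' le_rfl hm'
    set R' : List ℕ →₀ ℚ := P m' - Finsupp.single (1 :: m') ((bIndex m' : ℚ) + 1) with hR'def
    have hPm' : P m' = R' + Finsupp.single (1 :: m') ((bIndex m' : ℚ) + 1) := by
      rw [hR'def]; abel
    have hc : ((bIndex (1 :: m') : ℚ) + 1) = ((bIndex m' : ℚ) + 1) + 1 := by
      rw [bIndex_cons_one]; push_cast; ring
    have h9 : P (1 :: m') = (Finsupp.mapDomain ((1 : ℕ) :: ·) R' + E)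
        + Finsupp.single (1 :: 1 :: m') ((bIndex (1 :: m') : ℚ) + 1) := by
      rw [hE]
      conv_lhs => rw [hPm', Finsupp.mapDomain_add, Finsupp.mapDomain_single]
      conv_rhs => rw [hc, Finsupp.single_add]
      abel
    have hRR : R = Finsupp.mapDomain ((1 : ℕ) :: ·) R' + E := by
      rw [hRdef, h9]
      abel
    have hZWE : Zext (Wder Z) E = 0 := by
      apply Zext_zero_of
      intro t ht
      obtain ⟨_, _, h, tl, rfl, hh⟩ := hEp t ht
      exact Wder_eq_zero Z (bIndex_cons_ne h tl (by omega))
    have hZWmap : Zext (Wder Z) (Finsupp.mapDomain ((1 : ℕ) :: ·) R') = Zext Z R' := by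
      rw [Zext_mapDomain]
      exact Zext_congr _ _ _ (fun t _ => Wder_cons_one Z t)
    have hZR' : Zext Z R' = Polynomial.X * Z m' - ((bIndex m' : ℚ) + 1) • Z (1 :: m') := by
      rw [hR'def, Zext_sub, Zext_single, H3 m' hm']
    rw [hRR, Zext_add, hZWE, hZWmap, hZR', hZm', add_zero, bIndex_cons_one] at hder
    -- hder : Z (1::m') + X * Z m' = (X * Z m' - (b'+1) • Z (1::m')) + ((b'+1)+1) • D
    have hcast : ((bIndex m' + 1 : ℕ) : ℚ) = (bIndex m' : ℚ) + 1 := by push_cast; ring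
    rw [hcast] at hder
    set c : ℚ := (bIndex m' : ℚ) + 1 with hc
    have hkey : Polynomial.C ((c : ℝ) + 1) * Z (1 :: m')
        = Polynomial.C ((c : ℝ) + 1) * Polynomial.derivative (Z (1 :: 1 :: m')) := by
      rw [ratsmul, ratsmul] at hder
      have hcc : ((c + 1 : ℚ) : ℝ) = (c : ℝ) + 1 := by push_cast; ring
      rw [hcc] at hder
      rw [Polynomial.C_add, Polynomial.C_1] at hder ⊢
      linear_combination hder
    have hcne : ((c : ℝ) + 1) ≠ 0 := by
      have : (0 : ℝ) < (c : ℝ) + 1 := by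
        rw [hc]; push_cast; positivity
      exact ne_of_gt this
    have := mul_left_cancel₀ (Polynomial.C_ne_zero.2 hcne) hkey
    exact this.symm

end Generic
lemma der_P (Z : List ℕ → Polynomial ℝ) (P : List ℕ → (List ℕ →₀ ℚ))
    (H1 : P [] = Finsupp.single [1] 1)
    (H2 : ∀ x w, 1 ≤ x → IsIndex w → ∃ E : List ℕ →₀ ℚ,
      P (x :: w) = Finsupp.mapDomain (x :: ·) (P w) + Finsupp.single (1 :: x :: w) 1 + E
        ∧ ∀ t ∈ E.support, IsIndex t ∧ t.length ≤ w.length + 2 ∧ ∃ h tl, t = h :: tl ∧ 2 ≤ h)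
    (H3 : ∀ m, IsIndex m → Zext Z (P m) = Polynomial.X * Z m)
    (H4 : ∀ k, IsIndex k → IsAdmissible k → Z k = Polynomial.C (mzv k)) :
    ∀ m, IsIndex m → Polynomial.derivative (Z (1 :: m)) = Z m := by
  suffices h : ∀ N m, IsIndex m → m.length * (m.length + 1) + bIndex m ≤ N →
      Polynomial.derivative (Z (1 :: m)) = Z m by
    intro m hm
    exact h _ m hm le_rfl
  intro N
  induction N with
  | zero =>
      intro m hm hN
      apply der_key Z P H2 H3 H4 (supp_P P H1 H2) (coeff_P P H1 H2) m hm
      intro t' _ h2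
      exfalso
      cases m with
      | nil => rcases h2 with h2 | ⟨_, h2⟩ <;> simp [bIndex_nil] at h2
      | cons y v =>
          have : 0 < (y :: v).length * ((y :: v).length + 1) := by
            simp [List.length_cons]
          omega
  | succ N ihN =>
      intro m hm hN
      apply der_key Z P H2 H3 H4 (supp_P P H1 H2) (coeff_P P H1 H2) m hm
      intro t' h1 h2
      exact ihN t' h1 (lexmeas (bIndex_le t') h2 hN)

lemma final_P (Z : List ℕ → Polynomial ℝ) (P : List ℕ → (List ℕ →₀ ℚ))
    (H1 : P [] = Finsupp.single [1] 1)
    (H2 : ∀ x w, 1 ≤ x → IsIndex w → ∃ E : List ℕ →₀ ℚ,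
      P (x :: w) = Finsupp.mapDomain (x :: ·) (P w) + Finsupp.single (1 :: x :: w) 1 + E
        ∧ ∀ t ∈ E.support, IsIndex t ∧ t.length ≤ w.length + 2 ∧ ∃ h tl, t = h :: tl ∧ 2 ≤ h)
    (H3 : ∀ m, IsIndex m → Zext Z (P m) = Polynomial.X * Z m)
    (H4 : ∀ k, IsIndex k → IsAdmissible k → Z k = Polynomial.C (mzv k)) :
    ∀ k, IsIndex k → Z k = ∑ j ∈ Finset.range (bIndex k + 1),
      ((Z (k.drop j)).eval 0 / (j.factorial : ℝ)) • (Polynomial.X : Polynomial ℝ) ^ j := by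
  have hder := der_P Z P H1 H2 H3 H4
  intro k
  induction k with
  | nil =>
      intro _
      rw [bIndex_nil, Finset.sum_range_one]
      simp only [List.drop_zero]
      rw [H4 [] IsIndex_nil (fun a ha => by simp at ha)]
      simp [Polynomial.smul_eq_C_mul]
  | cons x w ih =>
      intro hk
      have hw := IsIndex_of_cons hk
      by_cases hx1 : x = 1
      · subst hx1
        have ihw := ih hw
        set p : Polynomial ℝ := ∑ j ∈ Finset.range (bIndex (1 :: w) + 1),
          ((Z ((1 :: w).drop j)).eval 0 / (j.factorial : ℝ)) • (Polynomial.X : Polynomial ℝ) ^ j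
          with hp
        have hdp : Polynomial.derivative p = Z w := by
          rw [hp, bIndex_cons_one, map_sum, Finset.sum_range_succ']
          have hz : Polynomial.derivative (((Z ((1 :: w).drop 0)).eval 0 /
              ((Nat.factorial 0 : ℕ) : ℝ)) • (Polynomial.X : Polynomial ℝ) ^ 0) = 0 := by
            simp
          rw [hz, add_zero, ihw]
          refine Finset.sum_congr rfl fun i _ => ?_
          rw [List.drop_succ_cons, Polynomial.derivative_smul, Polynomial.derivative_X_pow,
            Nat.add_sub_cancel, Polynomial.smul_eq_C_mul, Polynomial.smul_eq_C_mul,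
            ← mul_assoc, ← Polynomial.C_mul]
          congr 2
          rw [Nat.factorial_succ]
          have h1 : ((i + 1 : ℕ) : ℝ) ≠ 0 := by positivity
          have h2 : ((i.factorial : ℕ) : ℝ) ≠ 0 := by
            exact_mod_cast Nat.cast_ne_zero.2 (Nat.factorial_ne_zero i)
          field_simp
          push_cast
          ring
        have hc0 : p.coeff 0 = (Z (1 :: w)).eval 0 := by
          rw [hp, Polynomial.finset_sum_coeff]
          simp only [Polynomial.coeff_smul, Polynomial.coeff_X_pow, smul_eq_mul, mul_ite,
            mul_one, mul_zero]
          rw [Finset.sum_ite_eq (Finset.range (bIndex (1 :: w) + 1))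
            (0 : ℕ) (fun j => (Z ((1 :: w).drop j)).eval 0 / (j.factorial : ℝ))]
          simp
        have hd0 : Polynomial.derivative (Z (1 :: w) - p) = 0 := by
          rw [map_sub, hder w hw, hdp, sub_self]
        have hnd := Polynomial.natDegree_eq_zero_of_derivative_eq_zero hd0
        have heq := Polynomial.eq_C_of_natDegree_eq_zero hnd
        rw [Polynomial.coeff_sub, hc0, Polynomial.coeff_zero_eq_eval_zero, sub_self,
          Polynomial.C_0] at heq
        have := sub_eq_zero.1 heq
        exact this
      · rw [bIndex_cons_ne x w hx1, Finset.sum_range_one]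
        simp only [List.drop_zero]
        rw [H4 (x :: w) hk (adm_of_bIndex_eq_zero _ hk (bIndex_cons_ne x w hx1))]
        simp [Polynomial.smul_eq_C_mul]

lemma shuf_one_nil : shuf [1] [] = Finsupp.single [1] 1 := by
  rw [shuf_one_eq, indexToWord_nil, wordShuffle_one_nil, Finsupp.mapDomain_single]
  rfl

/-- **Proposition 2.1.** For every index k and each • ∈ {*, ⧢},
Z•(k;T) = Σ_{j=0}^{b(k)} Z•(kʲ;0) Tʲ/j!, where kʲ = ({1}^{b(k)-j}, l) = k with the
first j entries removed. -/
theorem reg_poly_coeff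
    (Zs Zh : List ℕ → Polynomial ℝ)
    (hZs_adm : ∀ k, IsIndex k → IsAdmissible k → Zs k = Polynomial.C (mzv k))
    (hZh_adm : ∀ k, IsIndex k → IsAdmissible k → Zh k = Polynomial.C (mzv k))
    (hZs_one : Zs [1] = Polynomial.X)
    (hZh_one : Zh [1] = Polynomial.X)
    (hZs_mul : ∀ k l, IsIndex k → IsIndex l → Zext Zs (harm k l) = Zs k * Zs l)
    (hZh_mul : ∀ k l, IsIndex k → IsIndex l → Zext Zh (shuf k l) = Zh k * Zh l)
    (k : List ℕ) (hk : IsIndex k) :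
    (Zs k = ∑ j ∈ Finset.range (bIndex k + 1),
        ((Zs (k.drop j)).eval 0 / (j.factorial : ℝ)) • (Polynomial.X : Polynomial ℝ) ^ j)
    ∧ (Zh k = ∑ j ∈ Finset.range (bIndex k + 1),
        ((Zh (k.drop j)).eval 0 / (j.factorial : ℝ)) • (Polynomial.X : Polynomial ℝ) ^ j) := by
  have h1 : IsIndex [1] := IsIndex_cons le_rfl IsIndex_nil
  constructor
  · refine final_P Zs (fun m => harm [1] m) harm_one_nil ?_ ?_ hZs_adm k hk
    · intro x w hx hw
      refine ⟨Finsupp.single ((x + 1) :: w) 1, harm_one_cons x w, ?_⟩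
      intro t ht
      have := Finsupp.support_single_subset ht
      simp only [Finset.mem_singleton] at this
      subst this
      exact ⟨IsIndex_cons (by omega) hw, by simp, x + 1, w, rfl, by omega⟩
    · intro m hm
      rw [hZs_mul [1] m h1 hm, hZs_one]
  · refine final_P Zh (fun m => shuf [1] m) shuf_one_nil ?_ ?_ hZh_adm k hk
    · intro x w hx hw
      exact shuf_one_cons x w hx hw
    · intro m hm
      rw [hZh_mul [1] m h1 hm, hZh_one]
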